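/- Let S1 ∼ N(0, 1/γ), S2 ∼ N(0, P2) and X with E‖X‖² ≤ nP be random vectors in ℝⁿ, with S1 independent of (S2, X). Set α = (1/γ)/((1/γ)+P2). Then E‖S1 − α(X + S1 + S2)‖² ≥ n·α·P2 − 2n·α²·√(P2·P). In particular, the mismatched MSE using the estimator α·Y with Y = X+S1+S2 is lower bounded by nαP2 − 2nα²√(P·P2). -/

import Mathlib

open MeasureTheory ProbabilityTheory Real
open scoped NNReal ENNReal

lemma integrable_sq_gauss (v : ℝ≥0) : Integrable (fun x : ℝ => x^2) (gaussianReal 0 v) := by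
  by_cases hv : v = 0
  · rw [hv, gaussianReal_zero_var]
    refine ⟨(measurable_id.pow_const 2).aestronglyMeasurable, ?_⟩
    rw [HasFiniteIntegral, lintegral_dirac]
    exact ENNReal.coe_lt_top
  · have hvpos : (0:ℝ) < v := lt_of_le_of_ne v.coe_nonneg (by exact_mod_cast (Ne.symm hv))
    have hb : (0:ℝ) < (2 * (v:ℝ))⁻¹ := by positivity
    rw [gaussianReal_of_var_ne_zero 0 hv]
    rw [gaussianPDF_def]
    rw [integrable_withDensity_iff (measurable_gaussianPDFReal 0 v).ennreal_ofReal
      (ae_of_all _ fun x => ENNReal.ofReal_lt_top)]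
    have base := integrable_rpow_mul_exp_neg_mul_sq hb (by norm_num : (-1:ℝ) < 2)
    have heq : (fun x : ℝ => x^2 * (ENNReal.ofReal (gaussianPDFReal 0 v x)).toReal)
        = fun x => (Real.sqrt (2 * Real.pi * v))⁻¹ * (x ^ ((2:ℕ):ℝ) * Real.exp (-(2*(v:ℝ))⁻¹ * x^2)) := by
      funext x
      rw [ENNReal.toReal_ofReal (gaussianPDFReal_nonneg 0 v x), gaussianPDFReal, Real.rpow_natCast,
        sub_zero]
      ring_nf
    rw [heq]
    exact base.const_mul _

lemma integral_sq_gaussianPDF (v : ℝ≥0) (hv : v ≠ 0) :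
    ∫ x : ℝ, gaussianPDFReal 0 v x * x^2 = v := by
  have hvpos : (0:ℝ) < v := lt_of_le_of_ne v.coe_nonneg (by exact_mod_cast (Ne.symm hv))
  have hb : (0:ℝ) < (2 * (v:ℝ))⁻¹ := by positivity
  set s : ℝ := 2 * (v:ℝ) with hs
  have hspos : (0:ℝ) < s := by positivity
  have h1 : (fun x : ℝ => gaussianPDFReal 0 v x * x^2)
      = fun x => (Real.sqrt (2 * Real.pi * v))⁻¹ * (x ^ 2 * Real.exp (-s⁻¹ * x^2)) := by
    funext x
    rw [gaussianPDFReal, sub_zero, hs]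
    ring_nf
  rw [h1, integral_const_mul]
  have h2 : ∫ x : ℝ, x ^ 2 * Real.exp (-s⁻¹ * x^2)
      = 2 * ∫ x in Set.Ioi (0:ℝ), x ^ 2 * Real.exp (-s⁻¹ * x^2) := by
    rw [← integral_comp_abs (f := fun x => x ^ 2 * Real.exp (-s⁻¹ * x^2))]
    congr 1
    funext x
    rw [sq_abs]
  have h3 : ∫ x in Set.Ioi (0:ℝ), x ^ 2 * Real.exp (-s⁻¹ * x^2)
      = (s⁻¹) ^ (-(2+1)/2 : ℝ) * (1/2) * Real.Gamma ((2+1)/2) := by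
    have h := integral_rpow_mul_exp_neg_mul_rpow (p := 2) (q := 2) (b := s⁻¹)
      (by norm_num) (by norm_num) hb
    rw [← h]
    refine setIntegral_congr_fun measurableSet_Ioi (fun x hx => ?_)
    norm_cast
  have hGamma : Real.Gamma ((2+1)/2 : ℝ) = Real.sqrt Real.pi / 2 := by
    rw [show ((2+1)/2 : ℝ) = 1/2 + 1 by norm_num, Real.Gamma_add_one (by norm_num),
      Real.Gamma_one_half_eq]
    ring
  have h4 : (s⁻¹ : ℝ) ^ (-(2+1)/2 : ℝ) = s * Real.sqrt s := by
    rw [Real.inv_rpow hspos.le, ← Real.rpow_neg hspos.le,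
      show (-(-(2+1)/2) : ℝ) = 1 + 1/2 by norm_num, Real.rpow_add hspos, Real.rpow_one,
      ← Real.sqrt_eq_rpow]
  have h5 : Real.sqrt (2 * Real.pi * v) = Real.sqrt s * Real.sqrt Real.pi := by
    rw [show 2 * Real.pi * (v:ℝ) = s * Real.pi by rw [hs]; ring, Real.sqrt_mul hspos.le]
  rw [h2, h3, hGamma, h4, h5]
  have h6 : (0:ℝ) < Real.sqrt s := Real.sqrt_pos.mpr hspos
  have h7 : (0:ℝ) < Real.sqrt Real.pi := Real.sqrt_pos.mpr Real.pi_pos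
  field_simp
  rw [hs]

lemma integral_sq_gauss (v : ℝ≥0) : ∫ x : ℝ, x^2 ∂(gaussianReal 0 v) = v := by
  by_cases hv : v = 0
  · rw [hv, gaussianReal_zero_var, integral_dirac]
    norm_num
  · rw [gaussianReal_of_var_ne_zero 0 hv, gaussianPDF_def]
    have : (fun x : ℝ => ENNReal.ofReal (gaussianPDFReal 0 v x))
        = fun x => ((Real.toNNReal (gaussianPDFReal 0 v x) : ℝ≥0) : ℝ≥0∞) := rfl
    rw [this, integral_withDensity_eq_integral_smul
      ((measurable_gaussianPDFReal 0 v).real_toNNReal) (fun x => x^2)]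
    rw [← integral_sq_gaussianPDF v hv]
    congr 1
    funext x
    rw [NNReal.smul_def, smul_eq_mul, Real.coe_toNNReal _ (gaussianPDFReal_nonneg 0 v x)]

lemma memLp2_gauss (v : ℝ≥0) : MemLp (id : ℝ → ℝ) 2 (gaussianReal 0 v) :=
  (memLp_two_iff_integrable_sq aestronglyMeasurable_id).mpr (integrable_sq_gauss v)

lemma integral_id_gauss (v : ℝ≥0) : ∫ x : ℝ, x ∂(gaussianReal 0 v) = 0 := by
  have hmap : (gaussianReal 0 v).map (fun x : ℝ => -x) = gaussianReal 0 v := by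
    have h := gaussianReal_map_const_mul (μ := 0) (v := v) (-1)
    have h2 : (fun x : ℝ => (-1) * x) = fun x : ℝ => -x := by funext x; ring
    rw [h2] at h
    rw [h]
    norm_num
  have h3 : ∫ x : ℝ, x ∂(gaussianReal 0 v) = ∫ x : ℝ, -x ∂(gaussianReal 0 v) := by
    conv_lhs => rw [← hmap]
    rw [integral_map measurable_neg.aemeasurable (measurable_id'.aestronglyMeasurable : AEStronglyMeasurable (fun x : ℝ => x) _)]
  rw [integral_neg] at h3
  linarith

lemma memLp2_integrable_mul {Ω : Type*} [MeasurableSpace Ω] {μ : Measure Ω} {f g : Ω → ℝ}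
    (hf : MemLp f 2 μ) (hg : MemLp g 2 μ) : Integrable (fun ω => f ω * g ω) μ := by
  have hf2 : Integrable (fun ω => f ω ^ 2) μ :=
    (memLp_two_iff_integrable_sq hf.aestronglyMeasurable).mp hf
  have hg2 : Integrable (fun ω => g ω ^ 2) μ :=
    (memLp_two_iff_integrable_sq hg.aestronglyMeasurable).mp hg
  refine ((hf2.add hg2).div_const 2).mono' (hf.aestronglyMeasurable.mul hg.aestronglyMeasurable)
    (ae_of_all _ fun ω => ?_)
  rw [Real.norm_eq_abs, abs_mul]
  simp only [Pi.add_apply]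
  nlinarith [sq_nonneg (|f ω| - |g ω|), sq_abs (f ω), sq_abs (g ω), abs_nonneg (f ω), abs_nonneg (g ω)]

lemma cs_l2 {Ω : Type*} [MeasurableSpace Ω] {μ : Measure Ω} {f g : Ω → ℝ}
    (hf : MemLp f 2 μ) (hg : MemLp g 2 μ) :
    -(Real.sqrt (∫ ω, f ω ^ 2 ∂μ) * Real.sqrt (∫ ω, g ω ^ 2 ∂μ)) ≤ ∫ ω, f ω * g ω ∂μ := by
  set F := hf.toLp f with hF
  set G := hg.toLp g with hG
  have h1 : (inner ℝ F G : ℝ) = ∫ ω, f ω * g ω ∂μ := by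
    rw [L2.inner_def]
    refine integral_congr_ae ?_
    filter_upwards [hf.coeFn_toLp, hg.coeFn_toLp] with ω h h'
    rw [h, h']
    simp [RCLike.inner_apply, mul_comm]
  have hsq : ∀ (h : MemLp f 2 μ), ‖h.toLp f‖ = Real.sqrt (∫ ω, f ω ^ 2 ∂μ) := by
    intro h
    have h2 : (inner ℝ (h.toLp f) (h.toLp f) : ℝ) = ∫ ω, f ω ^ 2 ∂μ := by
      rw [L2.inner_def]
      refine integral_congr_ae ?_
      filter_upwards [h.coeFn_toLp] with ω hw
      rw [hw]
      simp [RCLike.inner_apply, sq]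
    rw [← h2, real_inner_self_eq_norm_sq]
    rw [Real.sqrt_sq (norm_nonneg _)]
  have hFn : ‖F‖ = Real.sqrt (∫ ω, f ω ^ 2 ∂μ) := hsq hf
  have hGn : ‖G‖ = Real.sqrt (∫ ω, g ω ^ 2 ∂μ) := by
    have h2 : (inner ℝ G G : ℝ) = ∫ ω, g ω ^ 2 ∂μ := by
      rw [L2.inner_def]
      refine integral_congr_ae ?_
      filter_upwards [hg.coeFn_toLp] with ω hw
      rw [hw]
      simp [RCLike.inner_apply, sq]
    rw [← h2, real_inner_self_eq_norm_sq, Real.sqrt_sq (norm_nonneg _)]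
  calc -(Real.sqrt (∫ ω, f ω ^ 2 ∂μ) * Real.sqrt (∫ ω, g ω ^ 2 ∂μ))
      = -(‖F‖ * ‖G‖) := by rw [hFn, hGn]
    _ ≤ (inner ℝ F G : ℝ) := neg_le_of_abs_le (abs_real_inner_le_norm F G)
    _ = _ := h1

theorem stmt_8 (n : ℕ) (γ P P2 : ℝ) (hγ : 0 < γ) (hP : 0 ≤ P) (hP2 : 0 ≤ P2)
    {Ω : Type*} [MeasureSpace Ω] (μ : Measure Ω) [IsProbabilityMeasure μ]
    (S1 S2 X : Ω → EuclideanSpace ℝ (Fin n))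
    (hmS1 : Measurable S1) (hmS2 : Measurable S2) (hmX : Measurable X)
    (hS1 : ∀ i, Measure.map (fun ω => S1 ω i) μ = gaussianReal 0 (Real.toNNReal (1 / γ)))
    (hS2 : ∀ i, Measure.map (fun ω => S2 ω i) μ = gaussianReal 0 (Real.toNNReal P2))
    (hindep : IndepFun S1 (fun ω => (S2 ω, X ω)) μ)
    (hXint : Integrable (fun ω => ‖X ω‖ ^ 2) μ)
    (hXpow : ∫ ω, ‖X ω‖ ^ 2 ∂μ ≤ n * P) :
    (n : ℝ) * ((1 / γ) / (1 / γ + P2)) * P2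
        - 2 * n * ((1 / γ) / (1 / γ + P2)) ^ 2 * Real.sqrt (P2 * P) ≤
      ∫ ω, ‖S1 ω - ((1 / γ) / (1 / γ + P2)) • (X ω + S1 ω + S2 ω)‖ ^ 2 ∂μ := by
  have hγ' : (0:ℝ) < 1/γ := by positivity
  set α : ℝ := (1/γ) / (1/γ + P2) with hαdef
  have hden : (0:ℝ) < 1/γ + P2 := by linarith
  have hα0 : 0 ≤ α := by positivity
  -- norm identity
  have hnorm : ∀ y : EuclideanSpace ℝ (Fin n), ‖y‖^2 = ∑ i, (y i)^2 := by
    intro y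
    rw [EuclideanSpace.norm_eq, Real.sq_sqrt (by positivity)]
    exact Finset.sum_congr rfl fun i _ => by rw [Real.norm_eq_abs, sq_abs]
  -- measurability of components
  have hma : ∀ i, Measurable fun ω => S1 ω i := fun i => (measurable_pi_apply i).comp ((WithLp.measurable_ofLp 2 _).comp hmS1)
  have hmb : ∀ i, Measurable fun ω => S2 ω i := fun i => (measurable_pi_apply i).comp ((WithLp.measurable_ofLp 2 _).comp hmS2)
  have hmc : ∀ i, Measurable fun ω => X ω i := fun i => (measurable_pi_apply i).comp ((WithLp.measurable_ofLp 2 _).comp hmX)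
  -- MemLp facts
  have hla : ∀ i, MemLp (fun ω => S1 ω i) 2 μ := fun i => by
    have h := memLp2_gauss (Real.toNNReal (1/γ))
    rw [← hS1 i] at h
    exact (memLp_map_measure_iff aestronglyMeasurable_id (hma i).aemeasurable).mp h
  have hlb : ∀ i, MemLp (fun ω => S2 ω i) 2 μ := fun i => by
    have h := memLp2_gauss (Real.toNNReal P2)
    rw [← hS2 i] at h
    exact (memLp_map_measure_iff aestronglyMeasurable_id (hmb i).aemeasurable).mp h
  have hintc : ∀ i, Integrable (fun ω => (X ω i)^2) μ := fun i => by
    refine hXint.mono' ((hmc i).pow_const 2).aestronglyMeasurable (ae_of_all _ fun ω => ?_)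
    rw [Real.norm_eq_abs, abs_of_nonneg (sq_nonneg _), hnorm (X ω)]
    exact Finset.single_le_sum (fun j _ => sq_nonneg (X ω j)) (Finset.mem_univ i)
  have hlc : ∀ i, MemLp (fun ω => X ω i) 2 μ := fun i =>
    (memLp_two_iff_integrable_sq (hmc i).aestronglyMeasurable).mpr (hintc i)
  -- second moments
  have hsqa : ∀ i, ∫ ω, (S1 ω i)^2 ∂μ = 1/γ := fun i => by
    have h : ∫ ω, (S1 ω i)^2 ∂μ = ∫ x : ℝ, x^2 ∂(gaussianReal 0 (Real.toNNReal (1/γ))) := by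
      rw [← hS1 i, integral_map (hma i).aemeasurable
        ((measurable_id'.pow_const 2).aestronglyMeasurable : AEStronglyMeasurable (fun x : ℝ => x^2) _)]
    rw [h, integral_sq_gauss, Real.coe_toNNReal _ hγ'.le]
  have hsqb : ∀ i, ∫ ω, (S2 ω i)^2 ∂μ = P2 := fun i => by
    have h : ∫ ω, (S2 ω i)^2 ∂μ = ∫ x : ℝ, x^2 ∂(gaussianReal 0 (Real.toNNReal P2)) := by
      rw [← hS2 i, integral_map (hmb i).aemeasurable
        ((measurable_id'.pow_const 2).aestronglyMeasurable : AEStronglyMeasurable (fun x : ℝ => x^2) _)]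
    rw [h, integral_sq_gauss, Real.coe_toNNReal _ hP2]
  have hmeana : ∀ i, ∫ ω, S1 ω i ∂μ = 0 := fun i => by
    have h : ∫ ω, S1 ω i ∂μ = ∫ x : ℝ, x ∂(gaussianReal 0 (Real.toNNReal (1/γ))) := by
      rw [← hS1 i, integral_map (hma i).aemeasurable
        (measurable_id'.aestronglyMeasurable : AEStronglyMeasurable (fun x : ℝ => x) _)]
    rw [h, integral_id_gauss]
  -- independence
  have hiab : ∀ i, IndepFun (fun ω => S1 ω i) (fun ω => S2 ω i) μ := fun i =>
    hindep.comp ((measurable_pi_apply i).comp (WithLp.measurable_ofLp 2 _)) ((measurable_pi_apply i).comp ((WithLp.measurable_ofLp 2 _).comp measurable_fst))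
  have hiac : ∀ i, IndepFun (fun ω => S1 ω i) (fun ω => X ω i) μ := fun i =>
    hindep.comp ((measurable_pi_apply i).comp (WithLp.measurable_ofLp 2 _)) ((measurable_pi_apply i).comp ((WithLp.measurable_ofLp 2 _).comp measurable_snd))
  have hab : ∀ i, ∫ ω, S1 ω i * S2 ω i ∂μ = 0 := fun i => by
    rw [(hiab i).integral_fun_mul_eq_mul_integral (hma i).aestronglyMeasurable (hmb i).aestronglyMeasurable,
      hmeana i, zero_mul]
  have hac : ∀ i, ∫ ω, S1 ω i * X ω i ∂μ = 0 := fun i => by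
    rw [(hiac i).integral_fun_mul_eq_mul_integral (hma i).aestronglyMeasurable (hmc i).aestronglyMeasurable,
      hmeana i, zero_mul]
  -- per-component expansion
  have hcoef : (1-α)^2 * (1/γ) + α^2 * P2 = α * P2 := by
    rw [hαdef]
    field_simp
    ring
  have key : ∀ i, ∫ ω, (S1 ω i - α * (X ω i + S1 ω i + S2 ω i))^2 ∂μ
      = α * P2 + α^2 * (∫ ω, (X ω i)^2 ∂μ) + 2*α^2 * (∫ ω, S2 ω i * X ω i ∂μ) := by
    intro i
    have Ia2 : Integrable (fun ω => (S1 ω i)^2) μ :=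
      (memLp_two_iff_integrable_sq (hma i).aestronglyMeasurable).mp (hla i)
    have Ib2 : Integrable (fun ω => (S2 ω i)^2) μ :=
      (memLp_two_iff_integrable_sq (hmb i).aestronglyMeasurable).mp (hlb i)
    have Iab : Integrable (fun ω => S1 ω i * S2 ω i) μ := memLp2_integrable_mul (hla i) (hlb i)
    have Iac : Integrable (fun ω => S1 ω i * X ω i) μ := memLp2_integrable_mul (hla i) (hlc i)
    have Ibc : Integrable (fun ω => S2 ω i * X ω i) μ := memLp2_integrable_mul (hlb i) (hlc i)
    have hexp : (fun ω => (S1 ω i - α * (X ω i + S1 ω i + S2 ω i))^2)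
        = fun ω => ((1-α)^2 * (S1 ω i)^2 + α^2 * (S2 ω i)^2 + α^2 * (X ω i)^2
            - 2*(1-α)*α * (S1 ω i * S2 ω i) - 2*(1-α)*α * (S1 ω i * X ω i))
            + 2*α^2 * (S2 ω i * X ω i) := by
      funext ω; ring
    have J1 : Integrable (fun ω => (1-α)^2 * (S1 ω i)^2) μ := Ia2.const_mul _
    have J2 : Integrable (fun ω => α^2 * (S2 ω i)^2) μ := Ib2.const_mul _
    have J3 : Integrable (fun ω => α^2 * (X ω i)^2) μ := (hintc i).const_mul _
    have J4 : Integrable (fun ω => 2*(1-α)*α * (S1 ω i * S2 ω i)) μ := Iab.const_mul _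
    have J5 : Integrable (fun ω => 2*(1-α)*α * (S1 ω i * X ω i)) μ := Iac.const_mul _
    have J6 : Integrable (fun ω => 2*α^2 * (S2 ω i * X ω i)) μ := Ibc.const_mul _
    have K1 : Integrable (fun ω => (1-α)^2 * (S1 ω i)^2 + α^2 * (S2 ω i)^2) μ := J1.add J2
    have K2 : Integrable (fun ω => (1-α)^2 * (S1 ω i)^2 + α^2 * (S2 ω i)^2
        + α^2 * (X ω i)^2) μ := K1.add J3
    have K3 : Integrable (fun ω => (1-α)^2 * (S1 ω i)^2 + α^2 * (S2 ω i)^2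
        + α^2 * (X ω i)^2 - 2*(1-α)*α * (S1 ω i * S2 ω i)) μ := K2.sub J4
    have K4 : Integrable (fun ω => (1-α)^2 * (S1 ω i)^2 + α^2 * (S2 ω i)^2
        + α^2 * (X ω i)^2 - 2*(1-α)*α * (S1 ω i * S2 ω i)
        - 2*(1-α)*α * (S1 ω i * X ω i)) μ := K3.sub J5
    rw [hexp, integral_add K4 J6, integral_sub K3 J5, integral_sub K2 J4, integral_add K1 J3,
      integral_add J1 J2, integral_const_mul, integral_const_mul, integral_const_mul,
      integral_const_mul, integral_const_mul, integral_const_mul]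
    rw [hsqa i, hsqb i, hab i, hac i]
    rw [show (1-α)^2 * (1/γ) + α^2 * P2 + α^2 * (∫ ω, (X ω i)^2 ∂μ)
        - 2*(1-α)*α * 0 - 2*(1-α)*α * 0 + 2*α^2 * (∫ ω, S2 ω i * X ω i ∂μ)
        = ((1-α)^2 * (1/γ) + α^2 * P2) + α^2 * (∫ ω, (X ω i)^2 ∂μ)
          + 2*α^2 * (∫ ω, S2 ω i * X ω i ∂μ) from by ring, hcoef]
  -- sum over components
  have hVint : ∀ i, Integrable (fun ω => (S1 ω i - α * (X ω i + S1 ω i + S2 ω i))^2) μ := by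
    intro i
    have hV : MemLp (fun ω => S1 ω i - α * (X ω i + S1 ω i + S2 ω i)) 2 μ :=
      (hla i).sub ((((hlc i).add (hla i)).add (hlb i)).const_mul α)
    exact (memLp_two_iff_integrable_sq
      (((hma i).sub ((((hmc i).add (hma i)).add (hmb i)).const_mul α)).aestronglyMeasurable)).mp hV
  have hsum : ∫ ω, ‖S1 ω - α • (X ω + S1 ω + S2 ω)‖^2 ∂μ
      = ∑ i, ∫ ω, (S1 ω i - α * (X ω i + S1 ω i + S2 ω i))^2 ∂μ := by
    rw [← integral_finset_sum _ (fun i _ => hVint i)]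
    refine integral_congr_ae (ae_of_all _ fun ω => ?_)
    show ‖S1 ω - α • (X ω + S1 ω + S2 ω)‖^2 = ∑ i, (S1 ω i - α * (X ω i + S1 ω i + S2 ω i))^2
    rw [hnorm]
    refine Finset.sum_congr rfl fun i _ => ?_
    simp only [PiLp.sub_apply, PiLp.smul_apply, PiLp.add_apply, smul_eq_mul]
  -- sum of X second moments
  have hCsum : ∑ i, ∫ ω, (X ω i)^2 ∂μ = ∫ ω, ‖X ω‖^2 ∂μ := by
    rw [← integral_finset_sum _ (fun i _ => hintc i)]
    exact integral_congr_ae (ae_of_all _ fun ω => (hnorm (X ω)).symm)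
  have hC0 : ∀ i, 0 ≤ ∫ ω, (X ω i)^2 ∂μ := fun i => integral_nonneg fun ω => sq_nonneg _
  -- Cauchy-Schwarz bound on cross term
  have hBi : ∀ i, -(Real.sqrt P2 * Real.sqrt (∫ ω, (X ω i)^2 ∂μ)) ≤ ∫ ω, S2 ω i * X ω i ∂μ := by
    intro i
    have h := cs_l2 (hlb i) (hlc i)
    rwa [hsqb i] at h
  have hsqrtsum : ∑ i, Real.sqrt (∫ ω, (X ω i)^2 ∂μ) ≤ n * Real.sqrt P := by
    have h1 : (∑ i, Real.sqrt (∫ ω, (X ω i)^2 ∂μ))^2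
        ≤ (n : ℝ) * ∑ i, (Real.sqrt (∫ ω, (X ω i)^2 ∂μ))^2 := by
      have := sq_sum_le_card_mul_sum_sq (s := (Finset.univ : Finset (Fin n)))
        (f := fun i => Real.sqrt (∫ ω, (X ω i)^2 ∂μ))
      simpa using this
    have h2 : ∑ i, (Real.sqrt (∫ ω, (X ω i)^2 ∂μ))^2 = ∑ i, ∫ ω, (X ω i)^2 ∂μ :=
      Finset.sum_congr rfl fun i _ => Real.sq_sqrt (hC0 i)
    have h3 : (∑ i, Real.sqrt (∫ ω, (X ω i)^2 ∂μ))^2 ≤ (n:ℝ) * (n * P) := by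
      rw [h2, hCsum] at h1
      refine h1.trans (mul_le_mul_of_nonneg_left hXpow (Nat.cast_nonneg n))
    calc ∑ i, Real.sqrt (∫ ω, (X ω i)^2 ∂μ)
        = Real.sqrt ((∑ i, Real.sqrt (∫ ω, (X ω i)^2 ∂μ))^2) :=
          (Real.sqrt_sq (Finset.sum_nonneg fun i _ => Real.sqrt_nonneg _)).symm
      _ ≤ Real.sqrt ((n:ℝ) * (n * P)) := Real.sqrt_le_sqrt h3
      _ = n * Real.sqrt P := by
          rw [show (n:ℝ) * (n * P) = (n:ℝ)^2 * P by ring, Real.sqrt_mul (sq_nonneg _),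
            Real.sqrt_sq (Nat.cast_nonneg n)]
  -- assemble
  have hT : -(Real.sqrt P2 * ((n:ℝ) * Real.sqrt P)) ≤ ∑ i, ∫ ω, S2 ω i * X ω i ∂μ := by
    calc -(Real.sqrt P2 * ((n:ℝ) * Real.sqrt P))
        ≤ -(Real.sqrt P2 * ∑ i, Real.sqrt (∫ ω, (X ω i)^2 ∂μ)) := by
          have := mul_le_mul_of_nonneg_left hsqrtsum (Real.sqrt_nonneg P2)
          linarith
      _ = ∑ i, -(Real.sqrt P2 * Real.sqrt (∫ ω, (X ω i)^2 ∂μ)) := by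
          rw [Finset.mul_sum, ← Finset.sum_neg_distrib]
      _ ≤ _ := Finset.sum_le_sum fun i _ => hBi i
  have htotal : ∫ ω, ‖S1 ω - α • (X ω + S1 ω + S2 ω)‖^2 ∂μ
      = n * (α * P2) + α^2 * (∫ ω, ‖X ω‖^2 ∂μ)
        + 2*α^2 * ∑ i, ∫ ω, S2 ω i * X ω i ∂μ := by
    rw [hsum]
    rw [Finset.sum_congr rfl fun i _ => key i]
    rw [Finset.sum_add_distrib, Finset.sum_add_distrib, Finset.sum_const, ← Finset.mul_sum,
      ← Finset.mul_sum, hCsum]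
    simp [nsmul_eq_mul]
  have hX0 : 0 ≤ ∫ ω, ‖X ω‖^2 ∂μ := integral_nonneg fun ω => sq_nonneg _
  have hsqrtP2P : Real.sqrt P2 * Real.sqrt P = Real.sqrt (P2 * P) := (Real.sqrt_mul hP2 P).symm
  rw [htotal]
  have h1 : 0 ≤ α^2 * (∫ ω, ‖X ω‖^2 ∂μ) := mul_nonneg (sq_nonneg α) hX0
  have h2 : -(α^2 * ((n:ℝ) * Real.sqrt (P2 * P))) ≤ α^2 * ∑ i, ∫ ω, S2 ω i * X ω i ∂μ := by
    have h3 : -((n:ℝ) * Real.sqrt (P2 * P)) ≤ ∑ i, ∫ ω, S2 ω i * X ω i ∂μ := by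
      rw [← hsqrtP2P]; linarith [hT]
    nlinarith [sq_nonneg α]
  linarith
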